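/- arXiv:2410.04969 — 2 statements merged into one kernel-verified Lean document; each statement's English description precedes it below -/
import Mathlib

section
/- The ℂ-vector space of homogeneous polynomials of degree 3 in ℂ[x,y,z] that vanish at the nine projective points [0:1:1], [1:0:1], [0:−5:1], [0:10:3], [−5:0:1], [10:0:3], [1:−1:0], [1:4:1], [4:1:1] has dimension 2. -/
open MvPolynomial

noncomputable section

/-- The conic `Q = x² + y² + z² − 2xy − 2xz − 2yz`. -/
def Q : MvPolynomial (Fin 3) ℂ :=
  X 0 ^ 2 + X 1 ^ 2 + X 2 ^ 2 - 2 * X 0 * X 1 - 2 * X 0 * X 2 - 2 * X 1 * X 2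

/-- Coordinates of the nine points. -/
def pts : Fin 9 → (Fin 3 → ℂ) :=
  ![![0, 1, 1], ![1, 0, 1], ![0, (-5), 1], ![0, 10, 3], ![(-5), 0, 1], ![10, 0, 3], ![1, (-1), 0], ![1, 4, 1], ![4, 1, 1]]

namespace Stmt2Aux

open Finsupp

/-- The ten exponent vectors of degree-3 monomials in three variables. -/
def E : Fin 10 → (Fin 3 →₀ ℕ)
  | 0 => single 0 3
  | 1 => single 0 2 + single 1 1
  | 2 => single 0 2 + single 2 1
  | 3 => single 0 1 + single 1 2
  | 4 => single 0 1 + single 1 1 + single 2 1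
  | 5 => single 0 1 + single 2 2
  | 6 => single 1 3
  | 7 => single 1 2 + single 2 1
  | 8 => single 1 1 + single 2 2
  | 9 => single 2 3

def M (i : Fin 10) : MvPolynomial (Fin 3) ℂ := monomial (E i) 1

lemma Ed : ∀ i, (E i).degree = 3 := by
  intro i
  fin_cases i <;>
    simp [E, Finsupp.degree_apply, Finsupp.support_add_eq, Finsupp.support_single_ne_zero,
      Finsupp.single_apply, Finset.sum_union, Finsupp.support_single_disjoint]

set_option maxHeartbeats 1000000 in
lemma E_inj : Function.Injective E := by
  intro i j h
  have k0 := DFunLike.congr_fun h 0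
  have k1 := DFunLike.congr_fun h 1
  have k2 := DFunLike.congr_fun h 2
  clear h
  fin_cases i <;> fin_cases j <;> simp_all [E, Finsupp.single_apply]

lemma classify (d : Fin 3 →₀ ℕ) (hd : d.degree = 3) : ∃ i : Fin 10, d = E i := by
  have hsub := Finset.sum_subset (Finset.subset_univ d.support)
      (fun x _ hx => Finsupp.notMem_support_iff.mp hx)
  rw [Finsupp.degree_apply, hsub, Fin.sum_univ_three] at hd
  have h0 : d 0 = 0 ∨ d 0 = 1 ∨ d 0 = 2 ∨ d 0 = 3 := by omega
  have h1 : d 1 = 0 ∨ d 1 = 1 ∨ d 1 = 2 ∨ d 1 = 3 := by omega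
  have h2 : d 2 = 3 - d 0 - d 1 := by omega
  rcases h0 with h0|h0|h0|h0 <;> rcases h1 with h1|h1|h1|h1 <;>
    [ (exact ⟨9, by ext x; fin_cases x <;> simp_all [E, Finsupp.single_apply]⟩);
      (exact ⟨8, by ext x; fin_cases x <;> simp_all [E, Finsupp.single_apply]⟩);
      (exact ⟨7, by ext x; fin_cases x <;> simp_all [E, Finsupp.single_apply]⟩);
      (exact ⟨6, by ext x; fin_cases x <;> simp_all [E, Finsupp.single_apply]⟩);
      (exact ⟨5, by ext x; fin_cases x <;> simp_all [E, Finsupp.single_apply]⟩);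
      (exact ⟨4, by ext x; fin_cases x <;> simp_all [E, Finsupp.single_apply]⟩);
      (exact ⟨3, by ext x; fin_cases x <;> simp_all [E, Finsupp.single_apply]⟩);
      (omega);
      (exact ⟨2, by ext x; fin_cases x <;> simp_all [E, Finsupp.single_apply]⟩);
      (exact ⟨1, by ext x; fin_cases x <;> simp_all [E, Finsupp.single_apply]⟩);
      (omega); (omega);
      (exact ⟨0, by ext x; fin_cases x <;> simp_all [E, Finsupp.single_apply]⟩);
      (omega); (omega); (omega)]

lemma aevalM0 (g : Fin 3 → ℂ) : aeval g (M 0) = g 0 ^ 3 := by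
  simp [M, E, aeval_monomial, Fin.prod_univ_three, Finsupp.single_apply]
lemma aevalM1 (g : Fin 3 → ℂ) : aeval g (M 1) = g 0 ^ 2 * g 1 := by
  simp [M, E, aeval_monomial, Fin.prod_univ_three, Finsupp.single_apply]
lemma aevalM2 (g : Fin 3 → ℂ) : aeval g (M 2) = g 0 ^ 2 * g 2 := by
  simp [M, E, aeval_monomial, Fin.prod_univ_three, Finsupp.single_apply]
lemma aevalM3 (g : Fin 3 → ℂ) : aeval g (M 3) = g 0 * g 1 ^ 2 := by
  simp [M, E, aeval_monomial, Fin.prod_univ_three, Finsupp.single_apply]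
lemma aevalM4 (g : Fin 3 → ℂ) : aeval g (M 4) = g 0 * g 1 * g 2 := by
  simp [M, E, aeval_monomial, Fin.prod_univ_three, Finsupp.single_apply]
lemma aevalM5 (g : Fin 3 → ℂ) : aeval g (M 5) = g 0 * g 2 ^ 2 := by
  simp [M, E, aeval_monomial, Fin.prod_univ_three, Finsupp.single_apply]
lemma aevalM6 (g : Fin 3 → ℂ) : aeval g (M 6) = g 1 ^ 3 := by
  simp [M, E, aeval_monomial, Fin.prod_univ_three, Finsupp.single_apply]
lemma aevalM7 (g : Fin 3 → ℂ) : aeval g (M 7) = g 1 ^ 2 * g 2 := by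
  simp [M, E, aeval_monomial, Fin.prod_univ_three, Finsupp.single_apply]
lemma aevalM8 (g : Fin 3 → ℂ) : aeval g (M 8) = g 1 * g 2 ^ 2 := by
  simp [M, E, aeval_monomial, Fin.prod_univ_three, Finsupp.single_apply]
lemma aevalM9 (g : Fin 3 → ℂ) : aeval g (M 9) = g 2 ^ 3 := by
  simp [M, E, aeval_monomial, Fin.prod_univ_three, Finsupp.single_apply]

/-- First basis cubic: `xy(5z − x − y)`. -/
def P1 : MvPolynomial (Fin 3) ℂ := (5 : ℂ) • M 4 - M 1 - M 3

/-- Second basis cubic. -/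
def P2 : MvPolynomial (Fin 3) ℂ :=
  (15 : ℂ) • M 0 - M 1 + (10 : ℂ) • M 2 - M 3 - (275 : ℂ) • M 5 + (15 : ℂ) • M 6
    + (10 : ℂ) • M 7 - (275 : ℂ) • M 8 + (250 : ℂ) • M 9

lemma M_mem (i : Fin 10) : M i ∈ homogeneousSubmodule (Fin 3) ℂ 3 :=
  (mem_homogeneousSubmodule _ _).2 (isHomogeneous_monomial 1 (Ed i))

lemma P1_hom : P1 ∈ homogeneousSubmodule (Fin 3) ℂ 3 := by
  refine Submodule.sub_mem _ (Submodule.sub_mem _ (Submodule.smul_mem _ _ (M_mem 4)) (M_mem 1)) (M_mem 3)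

lemma P2_hom : P2 ∈ homogeneousSubmodule (Fin 3) ℂ 3 := by
  unfold P2
  refine Submodule.add_mem _ (Submodule.sub_mem _ (Submodule.add_mem _ (Submodule.add_mem _
    (Submodule.sub_mem _ (Submodule.sub_mem _ (Submodule.add_mem _ (Submodule.sub_mem _
      (Submodule.smul_mem _ _ (M_mem 0)) (M_mem 1)) (Submodule.smul_mem _ _ (M_mem 2)))
      (M_mem 3)) (Submodule.smul_mem _ _ (M_mem 5))) (Submodule.smul_mem _ _ (M_mem 6)))
    (Submodule.smul_mem _ _ (M_mem 7))) (Submodule.smul_mem _ _ (M_mem 8)))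
    (Submodule.smul_mem _ _ (M_mem 9))

lemma P1_vanish (k : Fin 9) : aeval (pts k) P1 = 0 := by
  have h : ∀ g : Fin 3 → ℂ, aeval g P1 = 5 * (g 0 * g 1 * g 2) - g 0 ^ 2 * g 1 - g 0 * g 1 ^ 2 := by
    intro g
    simp [P1, aevalM1, aevalM3, aevalM4, smul_eq_C_mul, map_mul, aeval_C, -aeval_eq_eval]
  fin_cases k
  · show aeval ![(0:ℂ),1,1] P1 = 0; rw [h]; norm_num [Matrix.cons_val_two, Matrix.tail_cons, Matrix.head_cons]
  · show aeval ![(1:ℂ),0,1] P1 = 0; rw [h]; norm_num [Matrix.cons_val_two, Matrix.tail_cons, Matrix.head_cons]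
  · show aeval ![(0:ℂ),-5,1] P1 = 0; rw [h]; norm_num [Matrix.cons_val_two, Matrix.tail_cons, Matrix.head_cons]
  · show aeval ![(0:ℂ),10,3] P1 = 0; rw [h]; norm_num [Matrix.cons_val_two, Matrix.tail_cons, Matrix.head_cons]
  · show aeval ![(-5:ℂ),0,1] P1 = 0; rw [h]; norm_num [Matrix.cons_val_two, Matrix.tail_cons, Matrix.head_cons]
  · show aeval ![(10:ℂ),0,3] P1 = 0; rw [h]; norm_num [Matrix.cons_val_two, Matrix.tail_cons, Matrix.head_cons]
  · show aeval ![(1:ℂ),-1,0] P1 = 0; rw [h]; norm_num [Matrix.cons_val_two, Matrix.tail_cons, Matrix.head_cons]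
  · show aeval ![(1:ℂ),4,1] P1 = 0; rw [h]; norm_num [Matrix.cons_val_two, Matrix.tail_cons, Matrix.head_cons]
  · show aeval ![(4:ℂ),1,1] P1 = 0; rw [h]; norm_num [Matrix.cons_val_two, Matrix.tail_cons, Matrix.head_cons]

lemma P2_vanish (k : Fin 9) : aeval (pts k) P2 = 0 := by
  have h : ∀ g : Fin 3 → ℂ, aeval g P2 =
      15 * g 0 ^ 3 - g 0 ^ 2 * g 1 + 10 * (g 0 ^ 2 * g 2) - g 0 * g 1 ^ 2 - 275 * (g 0 * g 2 ^ 2)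
        + 15 * g 1 ^ 3 + 10 * (g 1 ^ 2 * g 2) - 275 * (g 1 * g 2 ^ 2) + 250 * g 2 ^ 3 := by
    intro g
    simp [P2, aevalM0, aevalM1, aevalM2, aevalM3, aevalM5, aevalM6, aevalM7, aevalM8,
      aevalM9, smul_eq_C_mul, map_mul, aeval_C, -aeval_eq_eval]
  fin_cases k
  · show aeval ![(0:ℂ),1,1] P2 = 0; rw [h]; norm_num [Matrix.cons_val_two, Matrix.tail_cons, Matrix.head_cons]
  · show aeval ![(1:ℂ),0,1] P2 = 0; rw [h]; norm_num [Matrix.cons_val_two, Matrix.tail_cons, Matrix.head_cons]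
  · show aeval ![(0:ℂ),-5,1] P2 = 0; rw [h]; norm_num [Matrix.cons_val_two, Matrix.tail_cons, Matrix.head_cons]
  · show aeval ![(0:ℂ),10,3] P2 = 0; rw [h]; norm_num [Matrix.cons_val_two, Matrix.tail_cons, Matrix.head_cons]
  · show aeval ![(-5:ℂ),0,1] P2 = 0; rw [h]; norm_num [Matrix.cons_val_two, Matrix.tail_cons, Matrix.head_cons]
  · show aeval ![(10:ℂ),0,3] P2 = 0; rw [h]; norm_num [Matrix.cons_val_two, Matrix.tail_cons, Matrix.head_cons]
  · show aeval ![(1:ℂ),-1,0] P2 = 0; rw [h]; norm_num [Matrix.cons_val_two, Matrix.tail_cons, Matrix.head_cons]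
  · show aeval ![(1:ℂ),4,1] P2 = 0; rw [h]; norm_num [Matrix.cons_val_two, Matrix.tail_cons, Matrix.head_cons]
  · show aeval ![(4:ℂ),1,1] P2 = 0; rw [h]; norm_num [Matrix.cons_val_two, Matrix.tail_cons, Matrix.head_cons]

lemma cP1_4 : coeff (E 4) P1 = 5 := by
  simp [P1, M, coeff_monomial, E_inj.eq_iff]
lemma cP1_9 : coeff (E 9) P1 = 0 := by
  simp [P1, M, coeff_monomial, E_inj.eq_iff]
lemma cP2_4 : coeff (E 4) P2 = 0 := by
  simp [P2, M, coeff_monomial, E_inj.eq_iff]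
lemma cP2_9 : coeff (E 9) P2 = 250 := by
  simp [P2, M, coeff_monomial, E_inj.eq_iff]

set_option maxHeartbeats 1000000 in
lemma span_eq : homogeneousSubmodule (Fin 3) ℂ 3 ⊓
      (⨅ i : Fin 9, LinearMap.ker (aeval (pts i)).toLinearMap) = Submodule.span ℂ {P1, P2} := by
  apply le_antisymm
  · intro F hF
    rw [Submodule.mem_inf] at hF
    obtain ⟨hh, hki⟩ := hF
    have hhom : F.IsHomogeneous 3 := (mem_homogeneousSubmodule _ _).1 hh
    have hk : ∀ i : Fin 9, aeval (pts i) F = 0 := by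
      intro i
      have := (Submodule.mem_iInf _).mp hki i
      rw [LinearMap.mem_ker, AlgHom.toLinearMap_apply] at this
      exact this
    obtain ⟨c0,c1,c2,c3,c4,c5,c6,c7,c8,c9,hrep⟩ :
        ∃ c0 c1 c2 c3 c4 c5 c6 c7 c8 c9 : ℂ, F =
          c0 • M 0 + c1 • M 1 + c2 • M 2 + c3 • M 3 + c4 • M 4 + c5 • M 5 + c6 • M 6
            + c7 • M 7 + c8 • M 8 + c9 • M 9 := by
      refine ⟨coeff (E 0) F, coeff (E 1) F, coeff (E 2) F, coeff (E 3) F, coeff (E 4) F,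
        coeff (E 5) F, coeff (E 6) F, coeff (E 7) F, coeff (E 8) F, coeff (E 9) F, ?_⟩
      ext d
      by_cases hd : d.degree = 3
      · obtain ⟨j, rfl⟩ := classify d hd
        fin_cases j <;> simp [M, coeff_smul, coeff_monomial, E_inj.eq_iff]
      · have hne : ∀ i : Fin 10, E i ≠ d := fun i h => hd (h ▸ Ed i)
        rw [hhom.coeff_eq_zero hd]
        simp [M, coeff_smul, coeff_monomial, hne]
    have g0 : aeval ![(0:ℂ),1,1] F = 0 := hk 0
    have g1 : aeval ![(1:ℂ),0,1] F = 0 := hk 1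
    have g2 : aeval ![(0:ℂ),-5,1] F = 0 := hk 2
    have g3 : aeval ![(0:ℂ),10,3] F = 0 := hk 3
    have g4 : aeval ![(-5:ℂ),0,1] F = 0 := hk 4
    have g5 : aeval ![(10:ℂ),0,3] F = 0 := hk 5
    have g6 : aeval ![(1:ℂ),-1,0] F = 0 := hk 6
    have g7 : aeval ![(1:ℂ),4,1] F = 0 := hk 7
    have g8 : aeval ![(4:ℂ),1,1] F = 0 := hk 8
    rw [hrep] at g0 g1 g2 g3 g4 g5 g6 g7 g8
    simp only [map_add, map_smul, smul_eq_mul, aevalM0, aevalM1, aevalM2, aevalM3, aevalM4,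
      aevalM5, aevalM6, aevalM7, aevalM8, aevalM9, Matrix.cons_val_zero, Matrix.cons_val_one,
      Matrix.head_cons, Matrix.cons_val_two, Matrix.tail_cons] at g0 g1 g2 g3 g4 g5 g6 g7 g8
    have i0 : c0 = 3/50 * c9 := by
      linear_combination (-1/14 : ℂ) * g1 + (-1/250 : ℂ) * g4 + (1/1750 : ℂ) * g5
    have i1 : c1 = -1/5 * c4 - 1/250 * c9 := by
      linear_combination (1/7 : ℂ) * g0 + (-3/28 : ℂ) * g1 + (3/625 : ℂ) * g2
        + (-31/8750 : ℂ) * g3 + (-2/625 : ℂ) * g4 + (2/4375 : ℂ) * g5 + (-4/5 : ℂ) * g6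
        + (1/20 : ℂ) * g7
    have i2 : c2 = 1/25 * c9 := by
      linear_combination (-5/42 : ℂ) * g1 + (13/750 : ℂ) * g4 + (2/875 : ℂ) * g5
    have i3 : c3 = -1/5 * c4 - 1/250 * c9 := by
      linear_combination (1/14 : ℂ) * g0 + (-1/28 : ℂ) * g1 + (1/1250 : ℂ) * g2
        + (-13/4375 : ℂ) * g3 + (1/1250 : ℂ) * g4 + (-1/8750 : ℂ) * g5 + (1/5 : ℂ) * g6
        + (1/20 : ℂ) * g7
    have i5 : c5 = -11/10 * c9 := by
      linear_combination (25/21 : ℂ) * g1 + (-1/75 : ℂ) * g4 + (-1/350 : ℂ) * g5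
    have i6 : c6 = 3/50 * c9 := by
      linear_combination (-1/14 : ℂ) * g0 + (-1/250 : ℂ) * g2 + (1/1750 : ℂ) * g3
    have i7 : c7 = 1/25 * c9 := by
      linear_combination (-5/42 : ℂ) * g0 + (13/750 : ℂ) * g2 + (2/875 : ℂ) * g3
    have i8 : c8 = -11/10 * c9 := by
      linear_combination (25/21 : ℂ) * g0 + (-1/75 : ℂ) * g2 + (-1/350 : ℂ) * g3
    refine Submodule.mem_span_pair.mpr ⟨c4/5, c9/250, ?_⟩
    rw [hrep, i0, i1, i2, i3, i5, i6, i7, i8]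
    simp only [P1, P2]
    module
  · rw [Submodule.span_le]
    rintro x (rfl | rfl)
    · exact Submodule.mem_inf.mpr ⟨P1_hom, (Submodule.mem_iInf _).mpr fun i =>
        LinearMap.mem_ker.mpr (by rw [AlgHom.toLinearMap_apply]; exact P1_vanish i)⟩
    · exact Submodule.mem_inf.mpr ⟨P2_hom, (Submodule.mem_iInf _).mpr fun i =>
        LinearMap.mem_ker.mpr (by rw [AlgHom.toLinearMap_apply]; exact P2_vanish i)⟩

lemma li : LinearIndependent ℂ ![P1, P2] := by
  rw [LinearIndependent.pair_iff]
  intro s t hst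
  have h4 := congrArg (coeff (E 4)) hst
  have h9 := congrArg (coeff (E 9)) hst
  simp only [coeff_add, coeff_smul, cP1_4, cP1_9, cP2_4, cP2_9, coeff_zero, smul_eq_mul] at h4 h9
  exact ⟨by linear_combination h4/5, by linear_combination h9/250⟩

end Stmt2Aux

open Stmt2Aux

theorem stmt2 :
    Module.finrank ℂ
      ↥(homogeneousSubmodule (Fin 3) ℂ 3 ⊓
        ⨅ i : Fin 9, LinearMap.ker (aeval (pts i)).toLinearMap) = 2 := by
  rw [span_eq]
  have h := finrank_span_eq_card li
  rw [show Set.range ![P1, P2] = {P1, P2} by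
    ext x
    simp only [Matrix.range_cons, Matrix.range_empty, Set.mem_union, Set.mem_singleton_iff,
      Set.mem_empty_iff_false, Set.mem_insert_iff]
    tauto] at h
  rw [h]
  simp
end
end

section
/- There exists a homogeneous polynomial D of degree 3 in ℂ[x,y,z] that vanishes at the nine projective points [0:1:1], [1:0:1], [0:−5:1], [0:10:3], [−5:0:1], [10:0:3], [1:−1:0], [1:4:1], [4:1:1] and is divisible by none of the linear forms x, y, x+y−5z. -/
open MvPolynomial

noncomputable section

def Dpoly : MvPolynomial (Fin 3) ℂ :=
  C 3 * X 0 * X 0 * X 0 + C 3 * X 1 * X 1 * X 1 + C 2 * X 0 * X 0 * X 2 + C 2 * X 1 * X 1 * X 2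
    - C 1 * X 0 * X 1 * X 2 - C 55 * X 0 * X 2 * X 2 - C 55 * X 1 * X 2 * X 2 + C 50 * X 2 * X 2 * X 2

lemma hm (a : ℂ) (i j k : Fin 3) :
    (C a * X i * X j * X k : MvPolynomial (Fin 3) ℂ).IsHomogeneous 3 :=
  (((isHomogeneous_C _ a).mul (isHomogeneous_X ℂ i)).mul
    (isHomogeneous_X ℂ j)).mul (isHomogeneous_X ℂ k)

lemma Dhom : Dpoly.IsHomogeneous 3 := by
  unfold Dpoly
  repeat' first
  | apply IsHomogeneous.add | apply IsHomogeneous.sub | exact hm _ _ _ _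

lemma evalD (v : Fin 3 → ℂ) : eval v Dpoly =
    3 * v 0 * v 0 * v 0 + 3 * v 1 * v 1 * v 1 + 2 * v 0 * v 0 * v 2 + 2 * v 1 * v 1 * v 2
    - 1 * v 0 * v 1 * v 2 - 55 * v 0 * v 2 * v 2 - 55 * v 1 * v 2 * v 2 + 50 * v 2 * v 2 * v 2 := by
  simp [Dpoly]

lemma evalD' (a b c : ℂ) : eval ![a, b, c] Dpoly =
    3*a*a*a + 3*b*b*b + 2*a*a*c + 2*b*b*c - 1*a*b*c - 55*a*c*c - 55*b*c*c + 50*c*c*c := by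
  rw [evalD]; rfl

theorem stmt14 :
    ∃ D : MvPolynomial (Fin 3) ℂ, D.IsHomogeneous 3 ∧
      (∀ i : Fin 9, eval (pts i) D = 0) ∧
      ¬ (X 0 ∣ D) ∧ ¬ (X 1 ∣ D) ∧ ¬ ((X 0 + X 1 - 5 * X 2) ∣ D) := by
  refine ⟨Dpoly, Dhom, ?_, ?_, ?_, ?_⟩
  · intro i
    fin_cases i <;> rw [evalD] <;> norm_num [pts, Fin.isValue, Matrix.cons_val_two, Matrix.vecHead, Matrix.vecTail]
  · rintro ⟨c, hc⟩
    have h := congrArg (eval ![0, 5, 1]) hc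
    rw [eval_mul, evalD'] at h
    simp at h
    norm_num at h
  · rintro ⟨c, hc⟩
    have h := congrArg (eval ![5, 0, 1]) hc
    rw [eval_mul, evalD'] at h
    simp at h
    norm_num at h
  · rintro ⟨c, hc⟩
    have h := congrArg (eval ![5, 0, 1]) hc
    rw [eval_mul, evalD'] at h
    simp at h
    norm_num at h
end
end
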